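/- Let T be a finite tree with p ≥ 2 vertices, q = p − 1 edges and bipartition (X, Y). If there exists a bijection g from V(T) ∪ E(T) onto {1, 2, …, p + q} with g(V(T)) = {1, …, p}, max_{x ∈ X} g(x) < min_{y ∈ Y} g(y), and g(uv) + |g(u) − g(v)| = p + q + 1 for every edge uv of T, then T admits a set-ordered graceful labelling with respect to (X, Y). -/
import Mathlib


/-- The induced edge label `|f u - f v|` for a vertex labelling `f`. -/
def elabel {V : Type*} (f : V → ℕ) (u v : V) : ℕ :=
  max (f u) (f v) - min (f u) (f v)

/-- `(X, Y)` is a bipartition of the graph `G`: the two parts cover all vertices,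
are disjoint, and every edge joins a vertex of `X` to a vertex of `Y`. -/
def IsBipartitionOf {V : Type*} (G : SimpleGraph V) (X Y : Finset V) : Prop :=
  (∀ v : V, v ∈ X ∨ v ∈ Y) ∧ (∀ v : V, ¬(v ∈ X ∧ v ∈ Y)) ∧
    ∀ ⦃u v : V⦄, G.Adj u v → (u ∈ X ∧ v ∈ Y) ∨ (u ∈ Y ∧ v ∈ X)

/-- `f` is a set-ordered graceful labelling of `G` (with `q` edges) with respect to the
bipartition `(X, Y)`: `f` is injective into `{0,…,q}`, the induced edge labels
`|f u - f v|` are pairwise distinct and form exactly `{1,…,q}`, and every label on `X`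
is smaller than every label on `Y`. -/
def IsSetOrderedGraceful {V : Type*} (G : SimpleGraph V) (X Y : Finset V) (q : ℕ)
    (f : V → ℕ) : Prop :=
  Function.Injective f ∧ (∀ v : V, f v ≤ q) ∧
    (∀ u v u' v' : V, G.Adj u v → G.Adj u' v' →
      elabel f u v = elabel f u' v' → s(u, v) = s(u', v')) ∧
    (∀ u v : V, G.Adj u v → 1 ≤ elabel f u v ∧ elabel f u v ≤ q) ∧
    (∀ m : ℕ, 1 ≤ m → m ≤ q → ∃ u v : V, G.Adj u v ∧ elabel f u v = m) ∧
    (∀ x ∈ X, ∀ y ∈ Y, f x < f y)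

/-- `f` is a set-ordered odd-graceful labelling of `G` (with `q` edges) with respect to
the bipartition `(X, Y)`: `f` is injective into `{0,…,2q-1}`, the induced edge labels
`|f u - f v|` are pairwise distinct and form exactly the odd numbers `{1,3,…,2q-1}`,
and every label on `X` is smaller than every label on `Y`. -/
def IsSetOrderedOddGraceful {V : Type*} (G : SimpleGraph V) (X Y : Finset V) (q : ℕ)
    (f : V → ℕ) : Prop :=
  Function.Injective f ∧ (∀ v : V, f v ≤ 2 * q - 1) ∧
    (∀ u v u' v' : V, G.Adj u v → G.Adj u' v' →
      elabel f u v = elabel f u' v' → s(u, v) = s(u', v')) ∧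
    (∀ u v : V, G.Adj u v → Odd (elabel f u v) ∧ elabel f u v ≤ 2 * q - 1) ∧
    (∀ m : ℕ, Odd m → m ≤ 2 * q - 1 → ∃ u v : V, G.Adj u v ∧ elabel f u v = m) ∧
    (∀ x ∈ X, ∀ y ∈ Y, f x < f y)

/-- If a finite tree with `p ≥ 2` vertices and `q = p - 1` edges and bipartition
`(X, Y)` has a total labelling `g`, a bijection from `V(T) ∪ E(T)` onto `{1,…,p+q}`
with `g(V(T)) = {1,…,p}`, set-ordered on vertices and satisfying
`g(uv) + |g(u) - g(v)| = p + q + 1` for every edge `uv`, then the tree admits a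
set-ordered graceful labelling with respect to `(X, Y)`. -/
lemma elabel_shift {V : Type*} (gv : V → ℕ) (u v : V) (hu : 1 ≤ gv u) (hv : 1 ≤ gv v) :
    elabel (fun w => gv w - 1) u v = elabel gv u v := by
  unfold elabel; dsimp
  rcases le_total (gv u) (gv v) with h | h <;> omega

theorem sixC_to_setOrderedGraceful {V : Type*} [Fintype V] [DecidableEq V]
    (G : SimpleGraph V) (hT : G.IsTree)
    (p : ℕ) (hp : Fintype.card V = p) (hp2 : 2 ≤ p)
    (X Y : Finset V) (hbip : IsBipartitionOf G X Y)
    (gv : V → ℕ) (ge : Sym2 V → ℕ)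
    (hgvinj : Function.Injective gv) (hgvmem : ∀ v : V, 1 ≤ gv v ∧ gv v ≤ p)
    (hgvsurj : ∀ m : ℕ, 1 ≤ m → m ≤ p → ∃ v : V, gv v = m)
    (hgeinj : ∀ e ∈ G.edgeSet, ∀ e' ∈ G.edgeSet, ge e = ge e' → e = e')
    (hgemem : ∀ e ∈ G.edgeSet, p + 1 ≤ ge e ∧ ge e ≤ p + (p - 1))
    (hgesurj : ∀ m : ℕ, p + 1 ≤ m → m ≤ p + (p - 1) → ∃ e ∈ G.edgeSet, ge e = m)
    (hord : ∀ x ∈ X, ∀ y ∈ Y, gv x < gv y)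
    (hmagic : ∀ u v : V, G.Adj u v → ge s(u, v) + elabel gv u v = p + (p - 1) + 1) :
    ∃ f : V → ℕ, IsSetOrderedGraceful G X Y (p - 1) f := by
  refine ⟨fun v => gv v - 1, ?_, ?_, ?_, ?_, ?_, ?_⟩
  · intro a b hab
    have ha := (hgvmem a).1; have hb := (hgvmem b).1
    exact hgvinj (by dsimp at hab; omega)
  · intro v
    have := (hgvmem v).2; dsimp; omega
  · intro u v u' v' huv hu'v' heq
    have h1 := elabel_shift gv u v (hgvmem u).1 (hgvmem v).1
    have h2 := elabel_shift gv u' v' (hgvmem u').1 (hgvmem v').1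
    have hm1 := hmagic u v huv
    have hm2 := hmagic u' v' hu'v'
    exact hgeinj _ ((SimpleGraph.mem_edgeSet G).2 huv) _
      ((SimpleGraph.mem_edgeSet G).2 hu'v') (by omega)
  · intro u v huv
    have h1 := elabel_shift gv u v (hgvmem u).1 (hgvmem v).1
    have hm := hmagic u v huv
    have hmem := hgemem _ ((SimpleGraph.mem_edgeSet G).2 huv)
    omega
  · intro m hm1 hm2
    obtain ⟨e, he, hge⟩ := hgesurj (p + (p - 1) + 1 - m) (by omega) (by omega)
    induction e using Sym2.ind with
    | _ u v =>
      have huv : G.Adj u v := (SimpleGraph.mem_edgeSet G).1 he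
      refine ⟨u, v, huv, ?_⟩
      have h1 := elabel_shift gv u v (hgvmem u).1 (hgvmem v).1
      have hm := hmagic u v huv
      have hmem := hgemem _ ((SimpleGraph.mem_edgeSet G).2 huv)
      omega
  · intro x hx y hy
    have := hord x hx y hy
    have := (hgvmem x).1
    dsimp; omega
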